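/- A graph G is a k-gap interval graph (i.e., has a multiple interval representation with at most |V(G)| + k intervals in total) if and only if G can be obtained from an interval graph by a sequence of at most k operations of identifying pairs of vertices. -/

import Mathlib

def IsIntervalGraph {V : Type*} (G : SimpleGraph V) : Prop :=
  ∃ l r : V → ℝ, (∀ v, l v ≤ r v) ∧
    ∀ u v, u ≠ v → (G.Adj u v ↔ (Set.Icc (l u) (r u) ∩ Set.Icc (l v) (r v)).Nonempty)

def IsMultiIntervalRep {V : Type*} (G : SimpleGraph V) (f : V → Finset (ℝ × ℝ)) : Prop :=
  (∀ v, (f v).Nonempty) ∧ (∀ v, ∀ p ∈ f v, p.1 ≤ p.2) ∧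
    ∀ u v, u ≠ v →
      (G.Adj u v ↔ ∃ p ∈ f u, ∃ q ∈ f v,
        (Set.Icc p.1 p.2 ∩ Set.Icc q.1 q.2).Nonempty)

/-- A graph is a k-gap interval graph (it has a multiple interval representation with at
most n+k intervals) iff it is obtained from an interval graph by a sequence of at most k
identifications of pairs of vertices, i.e. iff it is the image of an interval graph `H`
on at most n+k vertices under a surjection `φ` (adjacency being the pushforward of
adjacency in `H` between distinct images). -/
theorem stmt5 {V : Type*} [Fintype V] (G : SimpleGraph V) (k : ℕ) :
    (∃ f : V → Finset (ℝ × ℝ), IsMultiIntervalRep G f ∧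
        ∑ v : V, (f v).card ≤ Fintype.card V + k) ↔
    (∃ (W : Type) (_ : Fintype W) (H : SimpleGraph W) (φ : W → V),
        IsIntervalGraph H ∧ Function.Surjective φ ∧
        Fintype.card W ≤ Fintype.card V + k ∧
        ∀ u v : V, G.Adj u v ↔ (u ≠ v ∧ ∃ a b : W, φ a = u ∧ φ b = v ∧ H.Adj a b)) := by
  classical
  constructor
  · rintro ⟨f, ⟨hne, hle, hadj⟩, hcard⟩
    set e := (Fintype.equivFin V) with he
    refine ⟨Σ i : Fin (Fintype.card V), {p : ℝ × ℝ // p ∈ f (e.symm i)}, inferInstance,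
      { Adj := fun a b => a ≠ b ∧
          (Set.Icc (a.2 : ℝ × ℝ).1 (a.2 : ℝ × ℝ).2 ∩
            Set.Icc (b.2 : ℝ × ℝ).1 (b.2 : ℝ × ℝ).2).Nonempty
        symm := by
          constructor
          rintro a b ⟨hab, hint⟩
          exact ⟨hab.symm, by rwa [Set.inter_comm]⟩
        loopless := by constructor; rintro a ⟨hab, -⟩; exact hab rfl },
      fun a => e.symm a.1, ?_, ?_, ?_, ?_⟩
    · exact ⟨fun a => (a.2 : ℝ × ℝ).1, fun a => (a.2 : ℝ × ℝ).2,
        fun a => hle _ _ a.2.2, fun a b hab => ⟨fun h => h.2, fun h => ⟨hab, h⟩⟩⟩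
    · intro v
      obtain ⟨p, hp⟩ := hne v
      exact ⟨⟨e v, ⟨p, by simpa using hp⟩⟩, by simp⟩
    · rw [Fintype.card_sigma]
      simp only [Fintype.card_coe]
      calc ∑ i : Fin (Fintype.card V), (f (e.symm i)).card
          = ∑ v : V, (f v).card := Fintype.sum_equiv e.symm _ _ (fun i => rfl)
        _ ≤ Fintype.card V + k := hcard
    · intro u v
      constructor
      · intro h
        have huv := h.ne
        obtain ⟨p, hp, q, hq, hint⟩ := (hadj u v huv).mp h
        refine ⟨huv, ⟨e u, ⟨p, by simpa using hp⟩⟩, ⟨e v, ⟨q, by simpa using hq⟩⟩,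
          by simp, by simp, ?_, hint⟩
        intro hcontra
        apply huv
        have : e u = e v := congrArg Sigma.fst hcontra
        simpa using congrArg e.symm this
      · rintro ⟨huv, a, b, ha, hb, -, hint⟩
        refine (hadj u v huv).mpr ⟨(a.2 : ℝ × ℝ), ?_, (b.2 : ℝ × ℝ), ?_, hint⟩
        · rw [← ha]; exact a.2.2
        · rw [← hb]; exact b.2.2
  · rintro ⟨W, _, H, φ, ⟨l, r, hlr, hadj⟩, hsurj, hcard, hG⟩
    refine ⟨fun v => (Finset.univ.filter fun w => φ w = v).image fun w => (l w, r w),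
      ⟨?_, ?_, ?_⟩, ?_⟩
    · intro v
      obtain ⟨w, hw⟩ := hsurj v
      exact ⟨(l w, r w), Finset.mem_image.mpr ⟨w, by simp [hw], rfl⟩⟩
    · intro v p hp
      obtain ⟨w, -, hw⟩ := Finset.mem_image.mp hp
      rw [← hw]
      exact hlr w
    · intro u v huv
      rw [hG u v]
      constructor
      · rintro ⟨-, a, b, ha, hb, hab⟩
        have hint := (hadj a b hab.ne).mp hab
        exact ⟨(l a, r a), Finset.mem_image.mpr ⟨a, by simp [ha], rfl⟩,
          (l b, r b), Finset.mem_image.mpr ⟨b, by simp [hb], rfl⟩, hint⟩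
      · rintro ⟨p, hp, q, hq, hint⟩
        obtain ⟨a, ha, rfl⟩ := Finset.mem_image.mp hp
        obtain ⟨b, hb, rfl⟩ := Finset.mem_image.mp hq
        simp only [Finset.mem_filter] at ha hb
        have hab : a ≠ b := fun h => huv (ha.2 ▸ hb.2 ▸ congrArg φ h)
        exact ⟨huv, a, b, ha.2, hb.2, (hadj a b hab).mpr hint⟩
    · calc ∑ v : V, ((Finset.univ.filter fun w => φ w = v).image fun w => (l w, r w)).card
          ≤ ∑ v : V, (Finset.univ.filter fun w => φ w = v).card :=
            Finset.sum_le_sum fun v _ => Finset.card_image_le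
        _ = Fintype.card W := by
            rw [← Finset.card_univ,
              Finset.card_eq_sum_card_fiberwise (f := φ) (fun x _ => Finset.mem_univ _)]
        _ ≤ Fintype.card V + k := hcard
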